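/- For all matrices A and B in SU(1,1;ℂ), η(A·B) = η(A)·η(B); that is, η is a group homomorphism from SU(1,1;ℂ) into the 3×3 real matrices. -/
import Mathlib

open Matrix ComplexConjugate

noncomputable section

/-- The matrix `J = diag(1, -1)` in `M₂(ℂ)`. -/
def Jc : Matrix (Fin 2) (Fin 2) ℂ := !![1, 0; 0, -1]

/-- `SU(1,1;ℂ) = {A ∈ M₂(ℂ) : A*JA = J and det A = 1}`. -/
def SU11C : Set (Matrix (Fin 2) (Fin 2) ℂ) := {A | Aᴴ * Jc * A = Jc ∧ A.det = 1}

/-- The double covering map `η : SU(1,1;ℂ) → SO⁺(2,1)`, written with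
`a = A₀₀ = a₁ + a₂ i` and `b = A₀₁ = b₁ + b₂ i`. -/
def eta (A : Matrix (Fin 2) (Fin 2) ℂ) : Matrix (Fin 3) (Fin 3) ℝ :=
  let a1 := (A 0 0).re; let a2 := (A 0 0).im
  let b1 := (A 0 1).re; let b2 := (A 0 1).im
  !![1 - 2*a2^2 + 2*b1^2, -2*a1*a2 + 2*b1*b2, 2*a1*b1 - 2*a2*b2;
     2*a1*a2 + 2*b1*b2, 1 - 2*a2^2 + 2*b2^2, 2*a1*b2 + 2*a2*b1;
     2*a1*b1 + 2*a2*b2, 2*a1*b2 - 2*a2*b1, 1 + 2*b1^2 + 2*b2^2]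

lemma su11_entries (A : Matrix (Fin 2) (Fin 2) ℂ) (hA : A ∈ SU11C) :
    A 1 0 = conj (A 0 1) ∧ A 1 1 = conj (A 0 0) ∧
      (A 0 0).re^2 + (A 0 0).im^2 - (A 0 1).re^2 - (A 0 1).im^2 = 1 := by
  obtain ⟨hJ, hdet⟩ := hA
  have hd : A 0 0 * A 1 1 - A 0 1 * A 1 0 = 1 := by
    rw [← Matrix.det_fin_two]; exact hdet
  have key : ∀ i j : Fin 2, (Aᴴ * Jc * A) i j = Jc i j := fun i j => by rw [hJ]
  have h1 := key 0 0
  have h2 := key 0 1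
  have h3 := key 1 0
  have h4 := key 1 1
  simp [Matrix.mul_apply, Jc, Fin.sum_univ_succ, Matrix.conjTranspose_apply] at h1 h2 h3 h4
  have hc : A 1 0 = conj (A 0 1) := by
    linear_combination (-(A 1 1))*h3 + (A 1 0)*h4 + conj (A 0 1)*hd
  refine ⟨hc, ?_, ?_⟩
  · linear_combination (-(A 1 1))*h1 + (A 1 0)*h2 + conj (A 0 0)*hd
  · rw [hc] at h1
    have hre := congrArg Complex.re h1
    simp [Complex.mul_re, Complex.conj_re, Complex.conj_im] at hre
    linear_combination hre

theorem stmt16 (A B : Matrix (Fin 2) (Fin 2) ℂ) (hA : A ∈ SU11C) (hB : B ∈ SU11C) :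
    eta (A * B) = eta A * eta B := by
  obtain ⟨hAc, hAd, hCA⟩ := su11_entries A hA
  obtain ⟨hBc, hBd, hCB⟩ := su11_entries B hB
  have hP : (A * B) 0 0 = A 0 0 * B 0 0 + A 0 1 * conj (B 0 1) := by
    simp [Matrix.mul_apply, Fin.sum_univ_succ, hBc]
  have hQ : (A * B) 0 1 = A 0 0 * B 0 1 + A 0 1 * conj (B 0 0) := by
    simp [Matrix.mul_apply, Fin.sum_univ_succ, hBd]
  ext i j
  fin_cases i <;> fin_cases j <;>
    simp [eta, Matrix.mul_apply, Fin.sum_univ_succ, hP, hQ,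
      Complex.add_re, Complex.add_im, Complex.mul_re, Complex.mul_im] <;>
    [(linear_combination (2*(B 0 1).re^2 - 2*(B 0 0).im^2)*hCA + (2*(A 0 1).re^2 - 2*(A 0 0).im^2)*hCB);
     (linear_combination (2*(B 0 1).re*(B 0 1).im - 2*(B 0 0).re*(B 0 0).im)*hCA + (2*(A 0 1).re*(A 0 1).im - 2*(A 0 0).re*(A 0 0).im)*hCB);
     (linear_combination (2*(B 0 0).re*(B 0 1).re - 2*(B 0 0).im*(B 0 1).im)*hCA + (2*(A 0 0).re*(A 0 1).re - 2*(A 0 0).im*(A 0 1).im)*hCB);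
     (linear_combination (2*(B 0 1).re*(B 0 1).im + 2*(B 0 0).re*(B 0 0).im)*hCA + (2*(A 0 1).re*(A 0 1).im + 2*(A 0 0).re*(A 0 0).im)*hCB);
     (linear_combination (2*(B 0 1).im^2 - 2*(B 0 0).im^2)*hCA + (2*(A 0 1).im^2 - 2*(A 0 0).im^2)*hCB);
     (linear_combination (2*(B 0 0).im*(B 0 1).re + 2*(B 0 0).re*(B 0 1).im)*hCA + (2*(A 0 0).im*(A 0 1).re + 2*(A 0 0).re*(A 0 1).im)*hCB);
     (linear_combination (2*(B 0 0).im*(B 0 1).im + 2*(B 0 0).re*(B 0 1).re)*hCA + (2*(A 0 0).im*(A 0 1).im + 2*(A 0 0).re*(A 0 1).re)*hCB);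
     (linear_combination (2*(B 0 0).re*(B 0 1).im - 2*(B 0 0).im*(B 0 1).re)*hCA + (2*(A 0 0).re*(A 0 1).im - 2*(A 0 0).im*(A 0 1).re)*hCB);
     (linear_combination (2*(B 0 1).im^2 + 2*(B 0 1).re^2)*hCA + (2*(A 0 1).im^2 + 2*(A 0 1).re^2)*hCB)]
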